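/- In the block construction, the total size of F is |F| = Σ_{j=1}^{m} C(m, j) · 2^{(m−j)s} = 2^{(m−1)s} · Σ_{j=1}^{m} C(m, j) · 2^{−(j−1)s}. -/
import Mathlib


open Finset

/-- A family of finite sets is union-closed if it contains the union of any two of
its members. -/
def UnionClosed {α : Type*} [DecidableEq α] (F : Finset (Finset α)) : Prop :=
  ∀ A ∈ F, ∀ B ∈ F, A ∪ B ∈ F

/-- The abundance of `x` with respect to a family `F`. -/
noncomputable def abundance {α : Type*} [DecidableEq α] (F : Finset (Finset α)) (x : α) : ℝ :=
  ((F.filter (fun A => x ∈ A)).card : ℝ) / (F.card : ℝ)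

/-- The average overlap density of `F`. -/
noncomputable def AOD {α : Type*} [DecidableEq α] (F : Finset (Finset α)) : ℝ :=
  (1 / (((F.erase ∅).card : ℝ))) *
    ∑ A ∈ F.erase ∅, (1 / (A.card : ℝ)) * ∑ x ∈ A, abundance F x

/-- The union-closed family generated by `G = {B i ∪ {j} : i, j ∈ T}`:
all unions of nonempty subcollections of `G`. -/
def blockFamily {n m : ℕ} (B : Fin m → Finset (Fin n)) (T : Finset (Fin n)) :
    Finset (Finset (Fin n)) :=
  ((((univ : Finset (Fin m)) ×ˢ T).image (fun p => B p.1 ∪ {p.2})).powerset.filter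
      (fun C => C.Nonempty)).image (fun C => C.sup id)

section Aux

variable {k m s : ℕ}
variable (B : Fin m → Finset (Fin (k * m))) (T : Fin m → Finset (Fin (k * m)))

theorem blockFamily_eq_image
    (hs : 0 < s)
    (hBdisj : ∀ i j : Fin m, i ≠ j → Disjoint (B i) (B j))
    (hT : ∀ i, T i ⊆ B i) (hTcard : ∀ i, (T i).card = s) :
    blockFamily B ((univ : Finset (Fin m)).biUnion T)
      = (((univ : Finset (Fin m)).powerset.filter (fun S => S.Nonempty)).sigma
          (fun S => ((univ \ S).biUnion T).powerset)).image
          (fun p => p.1.biUnion B ∪ p.2) := by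
  classical
  ext A
  simp only [blockFamily, mem_image, mem_filter, mem_powerset, mem_sigma, Sigma.exists]
  constructor
  · rintro ⟨C, ⟨hCsub, hCne⟩, hsup⟩
    set S : Finset (Fin m) := (univ : Finset (Fin m)).filter (fun i => B i ⊆ A) with hS
    set X : Finset (Fin (k * m)) := A \ S.biUnion B with hX
    -- every member of C is B i ∪ {t} with t ∈ ⋃ T, and is a subset of A
    have hmemC : ∀ c ∈ C, ∃ i t, t ∈ (univ : Finset (Fin m)).biUnion T ∧ c = B i ∪ {t} := by
      intro c hc
      have := hCsub hc
      simp only [mem_image, mem_product] at this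
      obtain ⟨⟨i, t⟩, ⟨-, ht⟩, rfl⟩ := this
      exact ⟨i, t, ht, rfl⟩
    have hcA : ∀ c ∈ C, c ⊆ A := by
      intro c hc
      rw [← hsup]
      exact le_sup (f := id) hc
    -- S is nonempty
    have hSne : S.Nonempty := by
      obtain ⟨c, hc⟩ := hCne
      obtain ⟨i, t, ht, rfl⟩ := hmemC c hc
      exact ⟨i, by simp [hS, (union_subset_iff.mp (hcA _ hc)).1]⟩
    -- X ⊆ (univ \ S).biUnion T
    have hXsub : X ⊆ (univ \ S).biUnion T := by
      intro x hx
      rw [hX, mem_sdiff] at hx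
      obtain ⟨hxA, hxB⟩ := hx
      rw [← hsup, mem_sup] at hxA
      obtain ⟨c, hc, hxc⟩ := hxA
      obtain ⟨i, t, ht, rfl⟩ := hmemC c hc
      have hBiA : B i ⊆ A := (union_subset_iff.mp (hcA _ hc)).1
      have hiS : i ∈ S := by simp [hS, hBiA]
      simp only [id_eq, mem_union, mem_singleton] at hxc
      rcases hxc with hxBi | rfl
      · exact absurd (mem_biUnion.mpr ⟨i, hiS, hxBi⟩) hxB
      · -- x = t ∈ ⋃ T
        simp only [mem_biUnion, mem_univ, true_and] at ht
        obtain ⟨i', hti'⟩ := ht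
        refine mem_biUnion.mpr ⟨i', ?_, hti'⟩
        rw [mem_sdiff]
        refine ⟨mem_univ _, fun hi'S => ?_⟩
        exact hxB (mem_biUnion.mpr ⟨i', hi'S, hT i' hti'⟩)
    -- A = S.biUnion B ∪ X
    have hA : S.biUnion B ∪ X = A := by
      apply Finset.Subset.antisymm
      · apply union_subset _ (sdiff_subset)
        intro x hx
        rw [mem_biUnion] at hx
        obtain ⟨i, hiS, hxBi⟩ := hx
        exact (mem_filter.mp hiS).2 hxBi
      · intro a ha
        by_cases h : a ∈ S.biUnion B
        · exact mem_union_left _ h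
        · exact mem_union_right _ (mem_sdiff.mpr ⟨ha, h⟩)
    exact ⟨S, X, ⟨⟨subset_univ S, hSne⟩, hXsub⟩, hA⟩
  · rintro ⟨S, X, ⟨⟨-, hSne⟩, hXsub⟩, rfl⟩
    obtain ⟨i1, hi1⟩ := hSne
    have hTi1 : (T i1).Nonempty := by rw [← card_pos, hTcard]; exact hs
    obtain ⟨t0, ht0⟩ := hTi1
    have ht0T : t0 ∈ (univ : Finset (Fin m)).biUnion T := mem_biUnion.mpr ⟨i1, mem_univ _, ht0⟩
    have hXT : X ⊆ (univ : Finset (Fin m)).biUnion T := by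
      intro x hx
      obtain ⟨i, hi, hxi⟩ := mem_biUnion.mp (hXsub hx)
      exact mem_biUnion.mpr ⟨i, mem_univ _, hxi⟩
    refine ⟨((S ×ˢ {t0}) ∪ ({i1} ×ˢ X)).image (fun p => B p.1 ∪ {p.2}), ⟨?_, ?_⟩, ?_⟩
    · apply image_subset_image
      apply union_subset
      · exact product_subset_product (subset_univ _) (by simpa using ht0T)
      · exact product_subset_product (subset_univ _) hXT
    · exact (Nonempty.image ⟨(i1, t0), by simp [hi1, ht0]⟩ _)
    · rw [Finset.sup_image]
      ext a
      rw [mem_sup]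
      simp only [CompTriple.comp_eq, Function.comp_apply, mem_union, mem_product,
        mem_singleton, mem_biUnion]
      constructor
      · rintro ⟨⟨i, t⟩, hp, ha⟩
        simp only [mem_union, mem_product, mem_singleton] at hp
        simp only [id_eq, mem_union, mem_singleton] at ha
        rcases hp with ⟨hiS, rfl⟩ | ⟨rfl, htX⟩
        · rcases ha with h | rfl
          · exact Or.inl ⟨i, hiS, h⟩
          · exact Or.inl ⟨i1, hi1, hT i1 ht0⟩
        · rcases ha with h | rfl
          · exact Or.inl ⟨i, hi1, h⟩
          · exact Or.inr htX
      · rintro (⟨i, hiS, hai⟩ | haX)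
        · exact ⟨(i, t0), by simp [hiS], by simp [hai]⟩
        · exact ⟨(i1, a), by simp [hi1, haX], by simp⟩

end Aux

section Aux2

variable {k m s : ℕ}
variable (B : Fin m → Finset (Fin (k * m))) (T : Fin m → Finset (Fin (k * m)))

theorem key_mem_iff
    (hsk : s + 2 ≤ k)
    (hBcard : ∀ i, (B i).card = k)
    (hBdisj : ∀ i j : Fin m, i ≠ j → Disjoint (B i) (B j))
    (hT : ∀ i, T i ⊆ B i) (hTcard : ∀ i, (T i).card = s)
    (S : Finset (Fin m)) (X : Finset (Fin (k * m)))
    (hXsub : X ⊆ (univ \ S).biUnion T) (i : Fin m) :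
    i ∈ S ↔ B i ⊆ S.biUnion B ∪ X := by
  constructor
  · intro hiS x hx
    exact mem_union_left _ (mem_biUnion.mpr ⟨i, hiS, hx⟩)
  · intro hsub
    by_contra hiS
    -- pick b ∈ B i \ T i
    have hne : (B i \ T i).Nonempty := by
      rw [← card_pos, card_sdiff_of_subset (hT i), hBcard, hTcard]
      omega
    obtain ⟨b, hb⟩ := hne
    rw [mem_sdiff] at hb
    have := hsub hb.1
    rw [mem_union] at this
    rcases this with h | h
    · obtain ⟨i', hi'S, hbi'⟩ := mem_biUnion.mp h
      have : i ≠ i' := fun h => hiS (h ▸ hi'S)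
      exact absurd ((hBdisj i i' this).le_bot (mem_inter.mpr ⟨hb.1, hbi'⟩)) (notMem_empty b)
    · obtain ⟨i'', hi'', hbT⟩ := mem_biUnion.mp (hXsub h)
      rw [mem_sdiff] at hi''
      have hbB : b ∈ B i'' := hT i'' hbT
      by_cases hieq : i = i''
      · exact hb.2 (hieq ▸ hbT)
      · exact absurd ((hBdisj i i'' hieq).le_bot (mem_inter.mpr ⟨hb.1, hbB⟩)) (notMem_empty b)

theorem X_disjoint
    (hBdisj : ∀ i j : Fin m, i ≠ j → Disjoint (B i) (B j))
    (hT : ∀ i, T i ⊆ B i)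
    (S : Finset (Fin m)) (X : Finset (Fin (k * m)))
    (hXsub : X ⊆ (univ \ S).biUnion T) :
    Disjoint (S.biUnion B) X := by
  rw [disjoint_left]
  intro b hb hbX
  obtain ⟨i, hiS, hbi⟩ := mem_biUnion.mp hb
  obtain ⟨i', hi', hbT⟩ := mem_biUnion.mp (hXsub hbX)
  rw [mem_sdiff] at hi'
  by_cases hieq : i = i'
  · exact hi'.2 (hieq ▸ hiS)
  · exact absurd ((hBdisj i i' hieq).le_bot (mem_inter.mpr ⟨hbi, hT i' hbT⟩)) (notMem_empty b)

theorem blockFamily_injOn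
    (hsk : s + 2 ≤ k)
    (hBcard : ∀ i, (B i).card = k)
    (hBdisj : ∀ i j : Fin m, i ≠ j → Disjoint (B i) (B j))
    (hT : ∀ i, T i ⊆ B i) (hTcard : ∀ i, (T i).card = s) :
    Set.InjOn (fun p : (_ : Finset (Fin m)) × Finset (Fin (k * m)) => p.1.biUnion B ∪ p.2)
      ((((univ : Finset (Fin m)).powerset.filter (fun S => S.Nonempty)).sigma
          (fun S => ((univ \ S).biUnion T).powerset)) : Finset _) := by
  rintro ⟨S1, X1⟩ hp ⟨S2, X2⟩ hq hA
  simp only [Finset.coe_sigma, Set.mem_sigma_iff, coe_filter, mem_powerset, Set.mem_setOf_eq,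
    mem_coe] at hp hq
  have hX1 : X1 ⊆ (univ \ S1).biUnion T := by simpa using hp.2
  have hX2 : X2 ⊆ (univ \ S2).biUnion T := by simpa using hq.2
  simp only at hA
  have hSeq : S1 = S2 := by
    ext i
    rw [key_mem_iff B T hsk hBcard hBdisj hT hTcard S1 X1 hX1 i,
      key_mem_iff B T hsk hBcard hBdisj hT hTcard S2 X2 hX2 i, hA]
  subst hSeq
  have hXeq : X1 = X2 := by
    have h1 := X_disjoint B T hBdisj hT S1 X1 hX1
    have h2 := X_disjoint B T hBdisj hT S1 X2 hX2
    rw [← union_sdiff_cancel_left h1, hA, union_sdiff_cancel_left h2]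
  rw [hXeq]

end Aux2

/-- In the block construction,
`|F| = Σ_{j=1}^{m} C(m,j) · 2^{(m−j)s} = 2^{(m−1)s} · Σ_{j=1}^{m} C(m,j) · 2^{−(j−1)s}`. -/
theorem blockFamily_card
    (k m s : ℕ) (hk : 0 < k) (hm : 2 ≤ m) (hs : 0 < s) (hsk : s + 2 ≤ k)
    (B : Fin m → Finset (Fin (k * m)))
    (hBcard : ∀ i, (B i).card = k)
    (hBdisj : ∀ i j : Fin m, i ≠ j → Disjoint (B i) (B j))
    (hBcover : (Finset.univ : Finset (Fin m)).biUnion B = (Finset.univ : Finset (Fin (k * m))))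
    (T : Fin m → Finset (Fin (k * m)))
    (hT : ∀ i, T i ⊆ B i) (hTcard : ∀ i, (T i).card = s)
    :
    (blockFamily B ((univ : Finset (Fin m)).biUnion T)).card
        = ∑ j ∈ Finset.Icc 1 m, m.choose j * 2 ^ ((m - j) * s) ∧
      ((blockFamily B ((univ : Finset (Fin m)).biUnion T)).card : ℝ)
        = 2 ^ ((m - 1) * s) *
            ∑ j ∈ Finset.Icc 1 m, (m.choose j : ℝ) * (2 : ℝ) ^ (-(((j - 1) * s : ℕ) : ℤ)) := by
  classical
  have hTdisj : ∀ i j : Fin m, i ≠ j → Disjoint (T i) (T j) :=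
    fun i j hij => (hBdisj i j hij).mono (hT i) (hT j)
  have hcard1 : (blockFamily B ((univ : Finset (Fin m)).biUnion T)).card
      = ∑ S ∈ (univ : Finset (Fin m)).powerset.filter (fun S => S.Nonempty),
          2 ^ ((m - S.card) * s) := by
    rw [blockFamily_eq_image B T hs hBdisj hT hTcard,
      card_image_of_injOn (blockFamily_injOn B T hsk hBcard hBdisj hT hTcard),
      card_sigma]
    refine sum_congr rfl (fun S hS => ?_)
    rw [card_powerset]
    congr 1
    rw [card_biUnion (fun i _ j _ hij => hTdisj i j hij)]
    rw [sum_congr rfl (fun i _ => hTcard i), sum_const, smul_eq_mul]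
    congr 1
    rw [card_sdiff_of_subset (subset_univ S), card_univ, Fintype.card_fin]
  have hins1 : (univ : Finset (Fin m)).powerset
      = insert ∅ ((univ : Finset (Fin m)).powerset.filter (fun S => S.Nonempty)) := by
    ext S
    simp only [mem_powerset, mem_insert, mem_filter]
    constructor
    · intro h
      rcases S.eq_empty_or_nonempty with rfl | hne
      · exact Or.inl rfl
      · exact Or.inr ⟨h, hne⟩
    · rintro (rfl | ⟨h, -⟩)
      · exact empty_subset _
      · exact h
  have hnotmem : (∅ : Finset (Fin m)) ∉
      (univ : Finset (Fin m)).powerset.filter (fun S => S.Nonempty) := by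
    simp
  have hsum_pow : ∑ S ∈ (univ : Finset (Fin m)).powerset, 2 ^ ((m - S.card) * s)
      = ∑ j ∈ Finset.range (m + 1), m.choose j * 2 ^ ((m - j) * s) := by
    rw [Finset.sum_powerset]
    rw [card_univ, Fintype.card_fin]
    refine sum_congr rfl (fun j hj => ?_)
    rw [sum_congr rfl (fun S hS => by rw [(mem_powersetCard.mp hS).2]),
      sum_const, card_powersetCard, card_univ, Fintype.card_fin, smul_eq_mul]
  have hins2 : Finset.range (m + 1) = insert 0 (Finset.Icc 1 m) := by
    ext j
    simp only [mem_range, mem_insert, mem_Icc]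
    omega
  have hfirst : (blockFamily B ((univ : Finset (Fin m)).biUnion T)).card
      = ∑ j ∈ Finset.Icc 1 m, m.choose j * 2 ^ ((m - j) * s) := by
    rw [hins1, sum_insert hnotmem] at hsum_pow
    rw [hins2, sum_insert (by simp)] at hsum_pow
    simp only [card_empty, Nat.choose_zero_right, one_mul, Nat.sub_zero] at hsum_pow
    omega
  refine ⟨hfirst, ?_⟩
  rw [hfirst, Nat.cast_sum, mul_sum]
  refine sum_congr rfl (fun j hj => ?_)
  rw [mem_Icc] at hj
  have hnat : (m - j) * s + (j - 1) * s = (m - 1) * s := by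
    rw [← Nat.add_mul]
    congr 1
    omega
  have h2 : (2 : ℝ) ^ ((m - j) * s) = 2 ^ ((m - 1) * s) * (2 : ℝ) ^ (-(((j - 1) * s : ℕ) : ℤ)) := by
    rw [← zpow_natCast (2 : ℝ) ((m - j) * s), ← zpow_natCast (2 : ℝ) ((m - 1) * s),
      ← zpow_add₀ (two_ne_zero)]
    congr 1
    omega
  rw [Nat.cast_mul, Nat.cast_pow, Nat.cast_ofNat, h2]
  ring
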